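/- Wasserstein-ℓ extrapolation uncertainty formula for engression (upper bound): Let g, g' be differentiable with derivative in (0, L], agreeing on (−∞, x_max + η_max], let η have continuous cdf F_η with support [−η_max, η_max] and quantile function Q, and let P_x, P'_x denote the laws of g(x + η) + βx and g'(x + η) + βx. Then for δ > 0 and ℓ ≥ 1, W_ℓ(P_{x_max+δ}, P'_{x_max+δ}) ≤ L·(∫_{η_max−δ}^{η_max} (η − η_max + δ)^ℓ dF_η(η))^{1/ℓ}. -/

import Mathlib

open Set MeasureTheory

/-- α-quantile of a distribution `ν` on `ℝ`. -/
noncomputable def quantileOf (ν : Measure ℝ) (α : ℝ) : ℝ :=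
  sInf {y : ℝ | α ≤ (ν (Iic y)).toReal}

/-- Wasserstein-ℓ distance on `ℝ` via the one-dimensional quantile formula:
`W_ℓ(P,P') = (∫₀¹ |Q_α(P) − Q_α(P')|^ℓ dα)^(1/ℓ)`. -/
noncomputable def wassersteinL (ℓ : ℝ) (P P' : Measure ℝ) : ℝ :=
  (∫ α in Ioo (0:ℝ) 1, |quantileOf P α - quantileOf P' α| ^ ℓ) ^ (1 / ℓ)


open Filter Topology ProbabilityTheory

section aux
variable {μ : Measure ℝ} [IsProbabilityMeasure μ] {ηmax α : ℝ}

lemma Iic_eta_one (hsupp : μ (Icc (-ηmax) ηmax)ᶜ = 0) : μ (Iic ηmax) = 1 := by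
  refine le_antisymm prob_le_one ?_
  calc (1:ENNReal) = μ univ := (measure_univ).symm
    _ = μ (Iic ηmax ∪ (Icc (-ηmax) ηmax)ᶜ) := by
        congr 1
        refine (eq_univ_of_forall fun x => ?_).symm
        by_cases hx : x ∈ Icc (-ηmax) ηmax
        · exact Or.inl hx.2
        · exact Or.inr hx
    _ ≤ μ (Iic ηmax) + μ (Icc (-ηmax) ηmax)ᶜ := measure_union_le _ _
    _ = μ (Iic ηmax) := by rw [hsupp, add_zero]

lemma Iic_zero (hsupp : μ (Icc (-ηmax) ηmax)ᶜ = 0) {y : ℝ} (hy : y < -ηmax) :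
    μ (Iic y) = 0 := by
  refine measure_mono_null (fun x hx => ?_) hsupp
  simp only [mem_compl_iff, mem_Icc, not_and_or, not_le]
  exact Or.inl (lt_of_le_of_lt hx hy)

lemma quantile_set_eq (hsupp : μ (Icc (-ηmax) ηmax)ᶜ = 0)
    (hα0 : 0 < α) (hα1 : α ≤ 1) :
    {y : ℝ | α ≤ (μ (Iic y)).toReal} = Ici (quantileOf μ α) := by
  set S := {y : ℝ | α ≤ (μ (Iic y)).toReal} with hS
  have hmemη : ηmax ∈ S := by
    simp only [hS, mem_setOf_eq, Iic_eta_one hsupp, ENNReal.toReal_one]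
    exact hα1
  have hne : S.Nonempty := ⟨ηmax, hmemη⟩
  have hup : ∀ y ∈ S, ∀ z, y ≤ z → z ∈ S := by
    intro y hy z hyz
    refine le_trans hy (ENNReal.toReal_mono (measure_ne_top μ _) (measure_mono (Iic_subset_Iic.2 hyz)))
  have hlb : ∀ y ∈ S, -ηmax ≤ y := by
    intro y hy
    by_contra hlt
    push_neg at hlt
    have := Iic_zero hsupp hlt
    rw [hS, mem_setOf_eq, this] at hy
    simp at hy
    linarith
  have hbdd : BddBelow S := ⟨-ηmax, hlb⟩
  set Q := quantileOf μ α with hQ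
  have hQS : Q ∈ S := by
    have htend : Tendsto (cdf μ) (𝓝[>] Q) (𝓝 (cdf μ Q)) :=
      ((cdf μ).right_continuous Q).tendsto.mono_left (nhdsWithin_mono _ Ioi_subset_Ici_self)
    have hev : ∀ y ∈ Ioi Q, α ≤ cdf μ y := by
      intro y hy
      obtain ⟨z, hz, hzy⟩ := exists_lt_of_csInf_lt hne hy
      rw [cdf_eq_real]
      exact hup z hz y hzy.le
    have : α ≤ cdf μ Q :=
      ge_of_tendsto htend (eventually_nhdsWithin_of_forall hev)
    rw [hS, mem_setOf_eq]; rwa [cdf_eq_real] at this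
  ext y
  constructor
  · intro hy
    exact csInf_le hbdd hy
  · intro hy
    exact hup Q hQS y hy

lemma quantile_le_eta (hsupp : μ (Icc (-ηmax) ηmax)ᶜ = 0)
    (hα0 : 0 < α) (hα1 : α ≤ 1) : quantileOf μ α ≤ ηmax := by
  have := quantile_set_eq hsupp hα0 hα1
  have hmem : ηmax ∈ {y : ℝ | α ≤ (μ (Iic y)).toReal} := by
    simp only [mem_setOf_eq, Iic_eta_one hsupp, ENNReal.toReal_one]; exact hα1
  rw [this] at hmem
  exact hmem

lemma neg_eta_le_quantile (hsupp : μ (Icc (-ηmax) ηmax)ᶜ = 0)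
    (hα0 : 0 < α) (hα1 : α ≤ 1) : -ηmax ≤ quantileOf μ α := by
  have hset := quantile_set_eq hsupp hα0 hα1
  have hQS : quantileOf μ α ∈ {y : ℝ | α ≤ (μ (Iic y)).toReal} := by
    rw [hset]; exact self_mem_Ici
  by_contra hlt
  push_neg at hlt
  rw [mem_setOf_eq, Iic_zero hsupp hlt] at hQS
  simp at hQS
  linarith

lemma quantile_le_iff (hsupp : μ (Icc (-ηmax) ηmax)ᶜ = 0)
    (hα0 : 0 < α) (hα1 : α ≤ 1) (s : ℝ) :
    quantileOf μ α ≤ s ↔ α ≤ (μ (Iic s)).toReal := by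
  have hset := quantile_set_eq hsupp hα0 hα1
  constructor
  · intro h
    have : s ∈ Ici (quantileOf μ α) := h
    rw [← hset] at this; exact this
  · intro h
    have : s ∈ {y : ℝ | α ≤ (μ (Iic y)).toReal} := h
    rw [hset] at this; exact this

end aux

section aux2
variable {μ : Measure ℝ} [IsProbabilityMeasure μ] {ηmax : ℝ}

noncomputable def Qext (μ : Measure ℝ) (ηmax : ℝ) : ℝ → ℝ :=
  fun α => if 0 < α then quantileOf μ (min α 1) else -ηmax

lemma Qext_eq {α : ℝ} (hα0 : 0 < α) (hα1 : α ≤ 1) : Qext μ ηmax α = quantileOf μ α := by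
  simp [Qext, hα0, min_eq_left hα1]

lemma Qext_mono (hsupp : μ (Icc (-ηmax) ηmax)ᶜ = 0) : Monotone (Qext μ ηmax) := by
  intro a b hab
  unfold Qext
  by_cases ha : 0 < a
  · have hb : 0 < b := lt_of_lt_of_le ha hab
    simp only [ha, hb, if_true]
    have h1 : (0:ℝ) < min a 1 := lt_min ha one_pos
    have h2 : min a 1 ≤ 1 := min_le_right _ _
    have h3 : (0:ℝ) < min b 1 := lt_min hb one_pos
    have h4 : min b 1 ≤ 1 := min_le_right _ _
    have hsub : {y : ℝ | min b 1 ≤ (μ (Iic y)).toReal} ⊆ {y : ℝ | min a 1 ≤ (μ (Iic y)).toReal} :=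
      fun y hy => le_trans (min_le_min hab le_rfl) hy
    have hbdd : BddBelow {y : ℝ | min a 1 ≤ (μ (Iic y)).toReal} := by
      rw [quantile_set_eq hsupp h1 h2]; exact bddBelow_Ici
    have hne : {y : ℝ | min b 1 ≤ (μ (Iic y)).toReal}.Nonempty := by
      rw [quantile_set_eq hsupp h3 h4]; exact ⟨_, self_mem_Ici⟩
    exact csInf_le_csInf hbdd hne hsub
  · by_cases hb : 0 < b
    · simp only [ha, hb, if_true, if_false]
      exact neg_eta_le_quantile hsupp (lt_min hb one_pos) (min_le_right _ _)
    · simp [ha, hb]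

lemma Qext_le_eta (hsupp : μ (Icc (-ηmax) ηmax)ᶜ = 0) (hηmax : 0 < ηmax) (α : ℝ) :
    Qext μ ηmax α ≤ ηmax := by
  unfold Qext
  by_cases ha : 0 < α
  · simp only [ha, if_true]
    exact quantile_le_eta hsupp (lt_min ha one_pos) (min_le_right _ _)
  · simp only [ha, if_false]; linarith

lemma Qext_measurable (hsupp : μ (Icc (-ηmax) ηmax)ᶜ = 0) : Measurable (Qext μ ηmax) :=
  (Qext_mono hsupp).measurable

lemma map_Qext (hsupp : μ (Icc (-ηmax) ηmax)ᶜ = 0) :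
    (volume.restrict (Ioo (0:ℝ) 1)).map (Qext μ ηmax) = μ := by
  haveI : IsFiniteMeasure (volume.restrict (Ioo (0:ℝ) 1)) := by
    constructor
    rw [Measure.restrict_apply_univ]
    simp [Real.volume_Ioo]
  haveI : IsFiniteMeasure ((volume.restrict (Ioo (0:ℝ) 1)).map (Qext μ ηmax)) :=
    Measure.isFiniteMeasure_map _ _
  refine Measure.ext_of_Iic _ _ (fun s => ?_)
  rw [Measure.map_apply (Qext_measurable hsupp) measurableSet_Iic,
    Measure.restrict_apply (Qext_measurable hsupp measurableSet_Iic)]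
  have hkey : ∀ α ∈ Ioo (0:ℝ) 1, (Qext μ ηmax α ≤ s ↔ α ≤ (μ (Iic s)).toReal) := by
    intro α hα
    rw [Qext_eq hα.1 hα.2.le]
    exact quantile_le_iff hsupp hα.1 hα.2.le s
  have hFle : (μ (Iic s)).toReal ≤ 1 := by
    rw [← ENNReal.toReal_one]
    exact ENNReal.toReal_mono (by simp) prob_le_one
  have hF0 : 0 ≤ (μ (Iic s)).toReal := ENNReal.toReal_nonneg
  by_cases hc : (μ (Iic s)).toReal < 1
  · have hset : Qext μ ηmax ⁻¹' Iic s ∩ Ioo 0 1 = Ioc 0 ((μ (Iic s)).toReal) := by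
      ext α
      simp only [mem_inter_iff, mem_preimage, mem_Iic, mem_Ioo, mem_Ioc]
      constructor
      · rintro ⟨h1, h2, h3⟩
        exact ⟨h2, (hkey α ⟨h2, h3⟩).1 h1⟩
      · rintro ⟨h1, h2⟩
        have h3 : α < 1 := lt_of_le_of_lt h2 hc
        exact ⟨(hkey α ⟨h1, h3⟩).2 h2, h1, h3⟩
    rw [hset, Real.volume_Ioc, sub_zero, ENNReal.ofReal_toReal (measure_ne_top μ _)]
  · push_neg at hc
    have hF1 : (μ (Iic s)).toReal = 1 := le_antisymm hFle hc
    have hμ1 : μ (Iic s) = 1 := by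
      rwa [ENNReal.toReal_eq_one_iff] at hF1
    have hset : Qext μ ηmax ⁻¹' Iic s ∩ Ioo 0 1 = Ioo 0 1 := by
      refine inter_eq_right.mpr (fun α hα => ?_)
      simp only [mem_preimage, mem_Iic]
      exact (hkey α hα).2 (by rw [hF1]; exact hα.2.le)
    rw [hset, Real.volume_Ioo, hμ1]
    norm_num

end aux2

section aux3
variable {μ : Measure ℝ} [IsProbabilityMeasure μ] {ηmax α : ℝ}

lemma quantile_map_comm (hsupp : μ (Icc (-ηmax) ηmax)ᶜ = 0)
    (hα0 : 0 < α) (hα1 : α ≤ 1)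
    {f : ℝ → ℝ} (hf : StrictMono f) (hfc : Continuous f) :
    quantileOf (μ.map f) α = f (quantileOf μ α) := by
  set Q := quantileOf μ α with hQdef
  have hset := quantile_set_eq hsupp hα0 hα1
  have hQS : α ≤ (μ (Iic Q)).toReal := by
    have : Q ∈ Ici Q := self_mem_Ici
    rw [← hset] at this; exact this
  have hmapIic : ∀ y, (μ.map f) (Iic y) = μ (f ⁻¹' Iic y) := fun y =>
    Measure.map_apply hfc.measurable measurableSet_Iic
  have hmem : α ≤ ((μ.map f) (Iic (f Q))).toReal := by
    rw [hmapIic]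
    have : f ⁻¹' Iic (f Q) = Iic Q := by
      ext t; simp [mem_preimage, mem_Iic, hf.le_iff_le]
    rwa [this]
  have hlb : ∀ y, α ≤ ((μ.map f) (Iic y)).toReal → f Q ≤ y := by
    intro y hy
    by_contra hlt
    push_neg at hlt
    rw [hmapIic] at hy
    set T := f ⁻¹' Iic y with hT
    rcases eq_empty_or_nonempty T with hTe | hTne
    · rw [hTe] at hy; simp at hy; linarith
    · have hTsub : T ⊆ Iio Q := by
        intro t ht
        have : f t ≤ y := ht
        exact hf.lt_iff_lt.1 (lt_of_le_of_lt this hlt)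
      have hTbdd : BddAbove T := ⟨Q, fun t ht => (hTsub ht).le⟩
      have hTclosed : IsClosed T := isClosed_Iic.preimage hfc
      have hsSup : sSup T ∈ T := hTclosed.csSup_mem hTne hTbdd
      have hsQ : sSup T < Q := hTsub hsSup
      have hTs : T ⊆ Iic (sSup T) := fun t ht => le_csSup hTbdd ht
      have h1 : α ≤ (μ (Iic (sSup T))).toReal :=
        le_trans hy (ENNReal.toReal_mono (measure_ne_top μ _) (measure_mono hTs))
      have : sSup T ∈ Ici Q := by rw [← hset]; exact h1
      exact absurd hsQ (not_lt.2 this)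
  refine le_antisymm ?_ ?_
  · exact csInf_le ⟨f Q, fun y hy => hlb y hy⟩ hmem
  · exact le_csInf ⟨f Q, hmem⟩ (fun y hy => hlb y hy)

lemma diff_bound {g g' : ℝ → ℝ} {L a : ℝ} (hL : 0 < L)
    (hg : Differentiable ℝ g) (hg' : Differentiable ℝ g')
    (hgd : ∀ x : ℝ, deriv g x ∈ Ioc 0 L) (hg'd : ∀ x : ℝ, deriv g' x ∈ Ioc 0 L)
    (hagree : ∀ x ≤ a, g x = g' x) (x : ℝ) :
    |g x - g' x| ≤ L * max (x - a) 0 := by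
  by_cases hx : x ≤ a
  · rw [hagree x hx, sub_self, abs_zero]
    positivity
  · push_neg at hx
    have hdiff : Differentiable ℝ (fun t => g t - g' t) := hg.sub hg'
    have hbound : ∀ t, ‖deriv (fun t => g t - g' t) t‖₊ ≤ L.toNNReal := by
      intro t
      have hd : deriv (fun t => g t - g' t) t = deriv g t - deriv g' t :=
        deriv_sub (hg t) (hg' t)
      rw [← NNReal.coe_le_coe, coe_nnnorm, Real.norm_eq_abs, hd,
        Real.coe_toNNReal _ hL.le]
      have h1 := hgd t
      have h2 := hg'd t
      rw [mem_Ioc] at h1 h2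
      rw [abs_le]
      constructor <;> linarith [h1.1, h1.2, h2.1, h2.2]
    have hlip : LipschitzWith L.toNNReal (fun t => g t - g' t) :=
      lipschitzWith_of_nnnorm_deriv_le hdiff hbound
    have := hlip.dist_le_mul x a
    rw [Real.dist_eq, Real.dist_eq, hagree a le_rfl, sub_self, sub_zero,
      Real.coe_toNNReal _ hL.le] at this
    calc |g x - g' x| ≤ L * |x - a| := this
      _ = L * max (x - a) 0 := by
          rw [abs_of_pos (by linarith : (0:ℝ) < x - a), max_eq_left (by linarith : (0:ℝ) ≤ x - a)]

end aux3

/-- Wasserstein-ℓ extrapolation uncertainty upper bound for engression.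
If `g, g'` are differentiable with derivative in `(0, L]`, agreeing on
`(−∞, x_max + η_max]`, and the noise law `μ` is continuous with support
`[−η_max, η_max]`, then for the conditional laws `P_x` of `g (x + η) + β x` and `P'_x`
of `g' (x + η) + β x`, for all `δ > 0` and `ℓ ≥ 1`,
`W_ℓ(P_{x_max+δ}, P'_{x_max+δ}) ≤ L·(∫_{η_max−δ}^{η_max} (η − η_max + δ)^ℓ dF_η)^{1/ℓ}`. -/
theorem engression_wassersteinL_bound
    (L ηmax xmax δ ℓ β : ℝ) (hL : 0 < L) (hηmax : 0 < ηmax) (hδ : 0 < δ) (hℓ : 1 ≤ ℓ)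
    (μ : Measure ℝ) [IsProbabilityMeasure μ]
    (hsupp : μ (Icc (-ηmax) ηmax)ᶜ = 0)
    (hcont : ∀ t : ℝ, μ {t} = 0)
    (g g' : ℝ → ℝ)
    (hg : Differentiable ℝ g) (hg' : Differentiable ℝ g')
    (hgderiv : ∀ x : ℝ, deriv g x ∈ Ioc 0 L) (hg'deriv : ∀ x : ℝ, deriv g' x ∈ Ioc 0 L)
    (hagree : ∀ x ≤ xmax + ηmax, g x = g' x) :
    wassersteinL ℓ
        (μ.map (fun t => g (xmax + δ + t) + β * (xmax + δ)))
        (μ.map (fun t => g' (xmax + δ + t) + β * (xmax + δ))) ≤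
      L * (∫ t in Ioc (ηmax - δ) ηmax, (t - ηmax + δ) ^ ℓ ∂μ) ^ (1 / ℓ) := by
  have hℓ0 : (0:ℝ) < ℓ := by linarith
  have hℓne : ℓ ≠ 0 := ne_of_gt hℓ0
  set f : ℝ → ℝ := fun t => g (xmax + δ + t) + β * (xmax + δ) with hfdef
  set f' : ℝ → ℝ := fun t => g' (xmax + δ + t) + β * (xmax + δ) with hf'def
  have hgSM : StrictMono g := strictMono_of_deriv_pos (fun x => (hgderiv x).1)
  have hg'SM : StrictMono g' := strictMono_of_deriv_pos (fun x => (hg'deriv x).1)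
  have hfSM : StrictMono f := by
    intro a b hab
    exact add_lt_add_of_lt_of_le (hgSM (by linarith)) le_rfl
  have hf'SM : StrictMono f' := by
    intro a b hab
    exact add_lt_add_of_lt_of_le (hg'SM (by linarith)) le_rfl
  have hfC : Continuous f :=
    (hg.continuous.comp (continuous_const.add continuous_id)).add continuous_const
  have hf'C : Continuous f' :=
    (hg'.continuous.comp (continuous_const.add continuous_id)).add continuous_const
  set M : ℝ → ℝ := fun α => max (Qext μ ηmax α - ηmax + δ) 0 with hMdef
  have hM0 : ∀ α, 0 ≤ M α := fun α => le_max_right _ _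
  have hMδ : ∀ α, M α ≤ δ := by
    intro α
    have := Qext_le_eta hsupp hηmax α
    exact max_le (by linarith) hδ.le
  have hQm : Measurable (Qext μ ηmax) := Qext_measurable hsupp
  have hMmeas : Measurable M := ((hQm.sub_const ηmax).add_const δ).max measurable_const
  have hφmeas : Measurable (fun t : ℝ => max (t - ηmax + δ) 0 ^ ℓ) := by
    have hc : Continuous (fun t : ℝ => max (t - ηmax + δ) 0) :=
      ((continuous_id.sub continuous_const).add continuous_const).max continuous_const
    exact (hc.rpow_const (fun x => Or.inr hℓ0.le)).measurable
  have hMℓmeas : Measurable (fun α => M α ^ ℓ) := hφmeas.comp hQm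
  -- pointwise bound on Ioo 0 1
  have hpt : ∀ α ∈ Ioo (0:ℝ) 1,
      |quantileOf (μ.map f) α - quantileOf (μ.map f') α| ^ ℓ ≤ L ^ ℓ * M α ^ ℓ := by
    intro α hα
    have hq1 : quantileOf (μ.map f) α = f (quantileOf μ α) :=
      quantile_map_comm hsupp hα.1 hα.2.le hfSM hfC
    have hq2 : quantileOf (μ.map f') α = f' (quantileOf μ α) :=
      quantile_map_comm hsupp hα.1 hα.2.le hf'SM hf'C
    have hdb := diff_bound hL hg hg' hgderiv hg'deriv hagree (xmax + δ + quantileOf μ α)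
    have harg : xmax + δ + quantileOf μ α - (xmax + ηmax) = Qext μ ηmax α - ηmax + δ := by
      rw [Qext_eq hα.1 hα.2.le]; ring
    have hbound : |quantileOf (μ.map f) α - quantileOf (μ.map f') α| ≤ L * M α := by
      rw [hq1, hq2, hfdef, hf'def]
      simp only []
      have heq : g (xmax + δ + quantileOf μ α) + β * (xmax + δ) -
          (g' (xmax + δ + quantileOf μ α) + β * (xmax + δ)) =
          g (xmax + δ + quantileOf μ α) - g' (xmax + δ + quantileOf μ α) := by ring
      rw [heq]
      rw [harg] at hdb
      exact hdb
    calc |quantileOf (μ.map f) α - quantileOf (μ.map f') α| ^ ℓ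
        ≤ (L * M α) ^ ℓ := Real.rpow_le_rpow (abs_nonneg _) hbound hℓ0.le
      _ = L ^ ℓ * M α ^ ℓ := Real.mul_rpow hL.le (hM0 α)
  -- step 1 : integral comparison
  have hupper_int : Integrable (fun α => L ^ ℓ * M α ^ ℓ)
      (volume.restrict (Ioo (0:ℝ) 1)) := by
    refine Integrable.mono' (integrable_const (L ^ ℓ * δ ^ ℓ))
      ((hMℓmeas.const_mul _).aestronglyMeasurable) (ae_of_all _ fun α => ?_)
    rw [Real.norm_eq_abs, abs_of_nonneg (by positivity)]
    exact mul_le_mul_of_nonneg_left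
      (Real.rpow_le_rpow (hM0 α) (hMδ α) hℓ0.le) (by positivity)
  have hstep1 : (∫ α in Ioo (0:ℝ) 1, |quantileOf (μ.map f) α - quantileOf (μ.map f') α| ^ ℓ)
      ≤ ∫ α in Ioo (0:ℝ) 1, L ^ ℓ * M α ^ ℓ := by
    refine integral_mono_of_nonneg (ae_of_all _ fun α => Real.rpow_nonneg (abs_nonneg _) _)
      hupper_int ?_
    refine (ae_restrict_iff' measurableSet_Ioo).2 (ae_of_all _ fun α hα => hpt α hα)
  -- step 2 & 3 : change of variables
  have hstep2 : (∫ α in Ioo (0:ℝ) 1, L ^ ℓ * M α ^ ℓ)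
      = L ^ ℓ * ∫ t, max (t - ηmax + δ) 0 ^ ℓ ∂μ := by
    rw [integral_const_mul]
    congr 1
    have : (∫ α in Ioo (0:ℝ) 1, M α ^ ℓ)
        = ∫ t, max (t - ηmax + δ) 0 ^ ℓ ∂((volume.restrict (Ioo (0:ℝ) 1)).map (Qext μ ηmax)) := by
      rw [integral_map hQm.aemeasurable hφmeas.aestronglyMeasurable]
    rw [this, map_Qext hsupp]
  -- step 4 : restrict the μ-integral
  have hsuppae : ∀ᵐ t ∂μ, t ∈ Icc (-ηmax) ηmax := by
    rw [ae_iff]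
    exact hsupp
  have hstep4 : (∫ t, max (t - ηmax + δ) 0 ^ ℓ ∂μ)
      = ∫ t in Ioc (ηmax - δ) ηmax, (t - ηmax + δ) ^ ℓ ∂μ := by
    have h1 : (∫ t, max (t - ηmax + δ) 0 ^ ℓ ∂μ)
        = ∫ t in Ioc (ηmax - δ) ηmax, max (t - ηmax + δ) 0 ^ ℓ ∂μ := by
      refine (setIntegral_eq_integral_of_ae_compl_eq_zero ?_).symm
      filter_upwards [hsuppae] with t ht hnot
      have h2 : t ≤ ηmax - δ := by
        rw [mem_Ioc, not_and_or] at hnot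
        rcases hnot with h | h
        · push_neg at h; linarith
        · exact absurd ht.2 h
      rw [max_eq_right (by linarith), Real.zero_rpow hℓne]
    rw [h1]
    refine setIntegral_congr_fun measurableSet_Ioc (fun t ht => ?_)
    rw [max_eq_left (by linarith [ht.1] : (0:ℝ) ≤ t - ηmax + δ)]
  -- conclusion
  set J : ℝ := ∫ t in Ioc (ηmax - δ) ηmax, (t - ηmax + δ) ^ ℓ ∂μ with hJdef
  have hJ0 : 0 ≤ J :=
    setIntegral_nonneg measurableSet_Ioc (fun t ht => Real.rpow_nonneg (by linarith [ht.1]) _)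
  have hIJ : (∫ α in Ioo (0:ℝ) 1, |quantileOf (μ.map f) α - quantileOf (μ.map f') α| ^ ℓ)
      ≤ L ^ ℓ * J := by
    exact hstep1.trans (le_of_eq (by rw [hstep2, hstep4]))
  have hI0 : 0 ≤ ∫ α in Ioo (0:ℝ) 1, |quantileOf (μ.map f) α - quantileOf (μ.map f') α| ^ ℓ :=
    integral_nonneg (fun α => Real.rpow_nonneg (abs_nonneg _) _)
  unfold wassersteinL
  calc (∫ α in Ioo (0:ℝ) 1, |quantileOf (μ.map f) α - quantileOf (μ.map f') α| ^ ℓ) ^ (1/ℓ)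
      ≤ (L ^ ℓ * J) ^ (1/ℓ) := Real.rpow_le_rpow hI0 hIJ (by positivity)
    _ = L * J ^ (1/ℓ) := by
        rw [Real.mul_rpow (Real.rpow_nonneg hL.le _) hJ0, ← Real.rpow_mul hL.le,
          mul_one_div_cancel hℓne, Real.rpow_one]
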